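/- Solid-angle values of the double-layer kernel on a spherical cap: Let ζ ∈ S², ρ ∈ (0,2), let e₁, e₂ be an orthonormal pair perpendicular to ζ, and set c(θ) = (1−ρ)ζ + √(ρ(2−ρ))·(cos θ · e₁ + sin θ · e₂). For ξ ∈ S² define I(ξ) = (1/(4π))·∫₀^{2π} (ζ − (1−ρ)c(θ)) · (ξ − (ξ·c(θ))c(θ)) / (1 − ξ·c(θ)) dθ. Then I(ξ) = 1 − ρ/2 whenever 1 − ξ·ζ < ρ, and I(ξ) = −ρ/2 whenever 1 − ξ·ζ > ρ. (I(ξ) is the arc-length integral over the boundary circle of the cap of the outward normal derivative of the fundamental solution η ↦ G(ξ·η); since the area of Γ_ρ(ζ) equals 2πρ, these values equal 1 − ‖Γ‖/(4π) inside and −‖Γ‖/(4π) outside, exhibiting the jump across the boundary.) -/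

import Mathlib

open MeasureTheory Real intervalIntegral
open scoped RealInnerProductSpace

noncomputable section

/-- ℝ³ as Euclidean space. -/
abbrev E3 : Type := EuclideanSpace ℝ (Fin 3)

section AuxLemmas
open Real

lemma pos_aux (A B₁ B₂ : ℝ) (hA : 0 < A) (hB : B₁^2 + B₂^2 < A^2) (θ : ℝ) :
    0 < A - B₁ * Real.cos θ - B₂ * Real.sin θ := by
  nlinarith [Real.sin_sq_add_cos_sq θ, sq_nonneg (B₁ * Real.sin θ - B₂ * Real.cos θ),
    sq_nonneg (A - B₁ * Real.cos θ - B₂ * Real.sin θ),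
    sq_nonneg (A + B₁ * Real.cos θ + B₂ * Real.sin θ)]

lemma hA0_aux (a t : ℝ) (h1 : a^2 ≤ 1) (h2 : -1 < t) (h3 : t < 1) : 0 < 1 - a * t := by
  nlinarith [sq_nonneg (a - t), sq_nonneg (a + t)]

lemma hasDerivAt_aux (A B₁ B₂ : ℝ) (hA : 0 < A) (hB : B₁^2 + B₂^2 < A^2) (θ : ℝ) :
    HasDerivAt (fun θ => (θ + 2 * Real.arctan ((B₁ * Real.sin θ - B₂ * Real.cos θ) /
      (A + Real.sqrt (A^2 - B₁^2 - B₂^2) - B₁ * Real.cos θ - B₂ * Real.sin θ))) /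
      Real.sqrt (A^2 - B₁^2 - B₂^2))
      (1 / (A - B₁ * Real.cos θ - B₂ * Real.sin θ)) θ := by
  set r := Real.sqrt (A^2 - B₁^2 - B₂^2) with hrdef
  have hr2 : r^2 = A^2 - B₁^2 - B₂^2 := Real.sq_sqrt (by nlinarith)
  have hr : 0 < r := Real.sqrt_pos.mpr (by nlinarith)
  have hAu : ∀ x : ℝ, 0 < A - B₁ * Real.cos x - B₂ * Real.sin x := pos_aux A B₁ B₂ hA hB
  have hd : 0 < A + r - B₁ * Real.cos θ - B₂ * Real.sin θ := by have := hAu θ; linarith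
  set s := Real.sin θ
  set co := Real.cos θ
  have hcs : s^2 + co^2 = 1 := sin_sq_add_cos_sq θ
  have hn : HasDerivAt (fun x => B₁ * Real.sin x - B₂ * Real.cos x) (B₁ * co + B₂ * s) θ := by
    have := ((Real.hasDerivAt_sin θ).const_mul B₁).sub ((Real.hasDerivAt_cos θ).const_mul B₂)
    exact this.congr_deriv (by simp only [s, co]; ring)
  have hdd : HasDerivAt (fun x => A + r - B₁ * Real.cos x - B₂ * Real.sin x) (B₁ * s - B₂ * co) θ := by
    have := (((hasDerivAt_const θ (A + r)).sub ((Real.hasDerivAt_cos θ).const_mul B₁)).sub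
      ((Real.hasDerivAt_sin θ).const_mul B₂))
    exact this.congr_deriv (by simp only [s, co]; ring)
  have hq := hn.div hdd hd.ne'
  have ha := (Real.hasDerivAt_arctan ((B₁ * s - B₂ * co) / (A + r - B₁ * co - B₂ * s))).comp θ hq
  have hfull := ((hasDerivAt_id θ).add (ha.const_mul 2)).div_const r
  refine hfull.congr_deriv ?_
  symm
  have h1 : A - B₁ * co - B₂ * s > 0 := hAu θ
  have hsθ : Real.sin θ = s := rfl
  have hcθ : Real.cos θ = co := rfl
  rw [hsθ, hcθ]
  have hq2 : 1 + ((B₁ * s - B₂ * co) / (A + r - B₁ * co - B₂ * s))^2 =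
      (2*(A+r)*(A - (B₁*co + B₂*s))) / (A + r - B₁ * co - B₂ * s)^2 := by
    rw [div_pow, eq_div_iff (pow_ne_zero 2 hd.ne'), add_mul, one_mul,
      div_mul_cancel₀ _ (pow_ne_zero 2 hd.ne')]
    linear_combination (B₁^2 + B₂^2) * hcs + hr2
  have e2 : (B₁ * co + B₂ * s) * (A + r - B₁ * co - B₂ * s) - (B₁ * s - B₂ * co) * (B₁ * s - B₂ * co)
      = (A + r) * ((B₁ * co + B₂ * s) - A + r) := by
    linear_combination (-(B₁^2 + B₂^2)) * hcs - hr2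
  rw [hq2, e2]
  have hAr : 0 < A + r := by linarith
  have hU : 0 < A - (B₁ * co + B₂ * s) := by linarith
  have step : 1 / (2 * (A + r) * (A - (B₁ * co + B₂ * s)) / (A + r - B₁ * co - B₂ * s) ^ 2) *
      ((A + r) * (B₁ * co + B₂ * s - A + r) / (A + r - B₁ * co - B₂ * s) ^ 2) =
      (B₁ * co + B₂ * s - A + r) / (2 * (A - (B₁ * co + B₂ * s))) := by
    have h2 : (A + r - B₁ * co - B₂ * s) ≠ 0 := hd.ne'
    have h3 : (A - (B₁ * co + B₂ * s)) ≠ 0 := hU.ne'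
    have h4 : (A + r) ≠ 0 := hAr.ne'
    field_simp
  rw [step]
  have step2 : 1 + 2 * ((B₁ * co + B₂ * s - A + r) / (2 * (A - (B₁ * co + B₂ * s)))) =
      r / (A - (B₁ * co + B₂ * s)) := by
    rw [eq_div_iff hU.ne']
    field_simp
    ring
  rw [step2]
  have h2 : (A - B₁ * co - B₂ * s) ≠ 0 := h1.ne'
  have h3 : (A - (B₁ * co + B₂ * s)) ≠ 0 := hU.ne'
  field_simp
  ring

end AuxLemmas

set_option maxHeartbeats 2000000 in
/-- Solid-angle values of the double-layer kernel on a spherical cap: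
the arc-length integral over the boundary circle of the cap of the outward normal
derivative of the fundamental solution η ↦ G(ξ·η) equals 1 − ρ/2 inside the cap and
−ρ/2 outside the closed cap. -/
theorem double_layer_kernel_solid_angle (ζ : E3) (hζ : ζ ∈ Metric.sphere (0 : E3) 1)
    (ρ : ℝ) (hρ0 : 0 < ρ) (hρ2 : ρ < 2)
    (e₁ e₂ : E3) (he₁ : ‖e₁‖ = 1) (he₂ : ‖e₂‖ = 1) (he₁e₂ : ⟪e₁, e₂⟫ = 0)
    (hζe₁ : ⟪ζ, e₁⟫ = 0) (hζe₂ : ⟪ζ, e₂⟫ = 0)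
    (c : ℝ → E3)
    (hc : ∀ θ : ℝ, c θ = (1 - ρ) • ζ + Real.sqrt (ρ * (2 - ρ)) •
      (Real.cos θ • e₁ + Real.sin θ • e₂))
    (ξ : E3) (hξ : ξ ∈ Metric.sphere (0 : E3) 1)
    (I : ℝ)
    (hI : I = (1 / (4 * π)) * ∫ θ in (0:ℝ)..(2 * π),
      ⟪ζ - (1 - ρ) • c θ, ξ - ⟪ξ, c θ⟫ • c θ⟫ / (1 - ⟪ξ, c θ⟫)) :
    (1 - ⟪ξ, ζ⟫ < ρ → I = 1 - ρ / 2) ∧ (ρ < 1 - ⟪ξ, ζ⟫ → I = -(ρ / 2)) := by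
  have hnζ : ‖ζ‖ = 1 := by simpa using mem_sphere_zero_iff_norm.mp hζ
  have hnξ : ‖ξ‖ = 1 := by simpa using mem_sphere_zero_iff_norm.mp hξ
  set a := ⟪ξ, ζ⟫ with ha
  set b₁ := ⟪ξ, e₁⟫ with hb₁
  set b₂ := ⟪ξ, e₂⟫ with hb₂
  set t : ℝ := 1 - ρ with ht
  set ss := Real.sqrt (ρ * (2 - ρ)) with hssdef
  have hss2 : ss ^ 2 = ρ * (2 - ρ) := Real.sq_sqrt (by nlinarith)
  -- Parseval
  have hON : Orthonormal ℝ ![ζ, e₁, e₂] := by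
    rw [orthonormal_iff_ite]
    intro i j
    fin_cases i <;> fin_cases j <;>
      simp [-PiLp.inner_apply, real_inner_self_eq_norm_sq, hnζ, he₁, he₂, he₁e₂, hζe₁, hζe₂,
        real_inner_comm ζ e₁, real_inner_comm ζ e₂, real_inner_comm e₁ e₂]
  have hcard : Fintype.card (Fin 3) = Module.finrank ℝ E3 := by
    simp [finrank_euclideanSpace_fin]
  let bas : Module.Basis (Fin 3) ℝ E3 :=
    basisOfLinearIndependentOfCardEqFinrank hON.linearIndependent hcard
  have hbas : ⇑bas = ![ζ, e₁, e₂] :=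
    coe_basisOfLinearIndependentOfCardEqFinrank _ _
  have hON' : Orthonormal ℝ ⇑bas := hbas ▸ hON
  let ob : OrthonormalBasis (Fin 3) ℝ E3 := bas.toOrthonormalBasis hON'
  have hob : ⇑ob = ![ζ, e₁, e₂] := by
    rw [show ⇑ob = ⇑bas from by simp [ob, Module.Basis.coe_toOrthonormalBasis], hbas]
  have hpars : a ^ 2 + b₁ ^ 2 + b₂ ^ 2 = 1 := by
    have h := ob.sum_inner_mul_inner ξ ξ
    rw [Fin.sum_univ_three, hob] at h
    simp only [Matrix.cons_val_zero, Matrix.cons_val_one, Matrix.head_cons,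
      Matrix.cons_val_two, Matrix.tail_cons] at h
    rw [real_inner_comm ξ ζ, real_inner_comm ξ e₁, real_inner_comm ξ e₂,
      real_inner_self_eq_norm_sq, hnξ] at h
    rw [← ha, ← hb₁, ← hb₂] at h
    nlinarith [h]
  -- inner products with c θ
  have hzz : ⟪ζ, ζ⟫ = 1 := by rw [real_inner_self_eq_norm_sq, hnζ]; norm_num
  have he11 : ⟪e₁, e₁⟫ = 1 := by rw [real_inner_self_eq_norm_sq, he₁]; norm_num
  have he22 : ⟪e₂, e₂⟫ = 1 := by rw [real_inner_self_eq_norm_sq, he₂]; norm_num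
  have hv : ∀ θ : ℝ, ⟪ξ, c θ⟫ = a * t + (ss * b₁ * Real.cos θ + ss * b₂ * Real.sin θ) := by
    intro θ
    rw [hc θ]
    simp only [inner_add_right, real_inner_smul_right]
    rw [← ha, ← hb₁, ← hb₂]
    ring
  have hζc : ∀ θ : ℝ, ⟪ζ, c θ⟫ = t := by
    intro θ
    rw [hc θ]
    simp only [inner_add_right, real_inner_smul_right, hζe₁, hζe₂, hzz]
    ring
  have hcc : ∀ θ : ℝ, ⟪c θ, c θ⟫ = 1 := by
    intro θ
    rw [hc θ]
    simp only [inner_add_right, inner_add_left, real_inner_smul_right, real_inner_smul_left,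
      hζe₁, hζe₂, he₁e₂, real_inner_comm ζ e₁, real_inner_comm ζ e₂, real_inner_comm e₁ e₂,
      hzz, he11, he22]
    linear_combination ss^2 * sin_sq_add_cos_sq θ + hss2
  have hnum : ∀ θ : ℝ, ⟪ζ - t • c θ, ξ - ⟪ξ, c θ⟫ • c θ⟫ = a - t * ⟪ξ, c θ⟫ := by
    intro θ
    rw [inner_sub_left, inner_sub_right, inner_sub_right, real_inner_smul_left,
      real_inner_smul_left, real_inner_smul_right, real_inner_smul_right,
      hζc θ, hcc θ, real_inner_comm ξ ζ, real_inner_comm ξ (c θ), ← ha]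
    ring
  clear hob hON' hbas ob bas hcard hON
  clear_value a b₁ b₂ t ss
  set A : ℝ := 1 - a * t with hAdef
  set B₁ : ℝ := ss * b₁ with hB₁def
  set B₂ : ℝ := ss * b₂ with hB₂def
  clear_value A B₁ B₂
  have hssq : ss ^ 2 = 1 - t ^ 2 := by rw [hss2, ht]; ring
  have hAB : A ^ 2 - B₁ ^ 2 - B₂ ^ 2 = (a - t) ^ 2 := by
    rw [hAdef, hB₁def, hB₂def]
    linear_combination (-(b₁^2 + b₂^2)) * hssq + (-(1 - t^2)) * hpars
  have hA0 : 0 < A := by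
    have h1 : a ^ 2 ≤ 1 := by linarith [hpars, sq_nonneg b₁, sq_nonneg b₂]
    have h2 : -1 < t := by rw [ht]; linarith
    have h3 : t < 1 := by rw [ht]; linarith
    rw [hAdef]
    exact hA0_aux a t h1 h2 h3
  have key : a ≠ t → I = t / 2 + (a - t) / (2 * |a - t|) := by
    intro hat
    have hB : B₁ ^ 2 + B₂ ^ 2 < A ^ 2 := by
      have h0 : (0:ℝ) < (a - t) ^ 2 := sq_pos_of_ne_zero (sub_ne_zero.mpr hat)
      linarith [hAB, h0]
    set r := Real.sqrt (A ^ 2 - B₁ ^ 2 - B₂ ^ 2) with hrdef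
    have hr : 0 < r := Real.sqrt_pos.mpr (by linarith [hB])
    have hrabs : r = |a - t| := by rw [hrdef, hAB, Real.sqrt_sq_eq_abs]
    have hpos : ∀ θ : ℝ, 0 < A - B₁ * Real.cos θ - B₂ * Real.sin θ := pos_aux A B₁ B₂ hA0 hB
    have hint : ∀ θ : ℝ, ⟪ζ - t • c θ, ξ - ⟪ξ, c θ⟫ • c θ⟫ / (1 - ⟪ξ, c θ⟫) =
        t + (a - t) * (1 / (A - B₁ * Real.cos θ - B₂ * Real.sin θ)) := by
      intro θ
      have hp := hpos θ
      rw [hAdef] at hp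
      rw [hnum θ, hv θ, hAdef]
      have hne1 : 1 - (a * t + (B₁ * Real.cos θ + B₂ * Real.sin θ)) ≠ 0 := by
        intro h; rw [show (1:ℝ) - (a * t + (B₁ * Real.cos θ + B₂ * Real.sin θ)) =
          1 - a * t - B₁ * Real.cos θ - B₂ * Real.sin θ by ring] at h; linarith
      have hne2 : 1 - a * t - B₁ * Real.cos θ - B₂ * Real.sin θ ≠ 0 := ne_of_gt hp
      field_simp
      ring
    have hderiv : ∀ θ ∈ Set.uIcc (0:ℝ) (2 * π), HasDerivAt
        (fun θ => t * θ + (a - t) * ((θ + 2 * Real.arctan ((B₁ * Real.sin θ - B₂ * Real.cos θ) /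
          (A + r - B₁ * Real.cos θ - B₂ * Real.sin θ))) / r))
        (t + (a - t) * (1 / (A - B₁ * Real.cos θ - B₂ * Real.sin θ))) θ := by
      intro θ _
      have h := ((hasDerivAt_id θ).const_mul t).add
        ((hasDerivAt_aux A B₁ B₂ hA0 hB θ).const_mul (a - t))
      exact h.congr_deriv (by ring)
    have hcont : IntervalIntegrable
        (fun θ => t + (a - t) * (1 / (A - B₁ * Real.cos θ - B₂ * Real.sin θ)))
        MeasureTheory.volume 0 (2 * π) := by
      apply Continuous.intervalIntegrable
      apply continuous_const.add
      apply continuous_const.mul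
      apply Continuous.div continuous_const (by continuity)
      exact fun θ => (hpos θ).ne'
    have hFTC := intervalIntegral.integral_eq_sub_of_hasDerivAt hderiv hcont
    have hIeq : I = (1 / (4 * π)) * ∫ θ in (0:ℝ)..(2 * π),
        (t + (a - t) * (1 / (A - B₁ * Real.cos θ - B₂ * Real.sin θ))) := by
      rw [hI]
      congr 1
      exact intervalIntegral.integral_congr (fun θ _ => hint θ)
    rw [hIeq, hFTC]
    simp only [Real.sin_two_pi, Real.cos_two_pi, Real.sin_zero, Real.cos_zero]
    rw [hrabs]
    have habs : |a - t| ≠ 0 := fun h => hat (by have := abs_eq_zero.mp h; linarith)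
    have hπ : π ≠ 0 := Real.pi_ne_zero
    field_simp
    ring
  constructor
  · intro hin
    have hat : t < a := by rw [ht]; linarith [hin]
    rw [key (ne_of_gt hat)]
    rw [abs_of_pos (by linarith : (0:ℝ) < a - t)]
    have hhalf : (a - t) / (2 * (a - t)) = 1 / 2 := by
      rw [div_eq_div_iff (by linarith) (by norm_num)]
      ring
    rw [hhalf, ht]
    ring
  · intro hout
    have hat : a < t := by rw [ht]; linarith [hout]
    rw [key (ne_of_lt hat)]
    rw [abs_of_neg (by linarith : a - t < 0)]
    have hhalf : (a - t) / (2 * -(a - t)) = -(1 / 2) := by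
      rw [div_eq_iff (by linarith : (2:ℝ) * -(a - t) ≠ 0)]
      ring
    rw [hhalf, ht]
    ring


end
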